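/- For every real a > 1, every integer m ≥ 1 and every x ≥ 0, R̂_{m,a}(e₃; x) = 1/(4m³) + (7/2)·x·(log a)/((a^{1/m} − 1)·m³) + (9/2)·x²·(log a)²/((a^{1/m} − 1)²·m³) + x³·(log a)³/((a^{1/m} − 1)³·m³), where e₃(t) = t³. -/

import Mathlib

open Real

lemma exp_tsum (y : ℝ) : ∑' k : ℕ, y ^ k / (Nat.factorial k : ℝ) = Real.exp y := by
  rw [Real.exp_eq_exp_ℝ, NormedSpace.exp_eq_tsum_div]

lemma desc_shift (y : ℝ) (j : ℕ) :
    (fun k : ℕ => (Nat.descFactorial (k + j) j : ℝ) * y ^ (k + j) / (Nat.factorial (k + j) : ℝ))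
      = fun k : ℕ => y ^ j * (y ^ k / (Nat.factorial k : ℝ)) := by
  funext k
  have h : (Nat.factorial (k + j - j)) * Nat.descFactorial (k + j) j = Nat.factorial (k + j) :=
    Nat.factorial_mul_descFactorial (by omega)
  simp only [Nat.add_sub_cancel] at h
  have hfac : (Nat.factorial (k + j) : ℝ) = (Nat.factorial k : ℝ) * (Nat.descFactorial (k + j) j : ℝ) := by
    exact_mod_cast h.symm
  have h1 : (Nat.factorial k : ℝ) ≠ 0 := Nat.cast_ne_zero.2 (Nat.factorial_ne_zero k)
  have h2 : (Nat.descFactorial (k + j) j : ℝ) ≠ 0 := by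
    have : Nat.descFactorial (k + j) j ≠ 0 := by
      intro hh
      exact (Nat.factorial_ne_zero (k + j)) (by rw [← h, hh, Nat.mul_zero])
    exact_mod_cast this
  rw [hfac, pow_add]
  field_simp

lemma desc_vanish (y : ℝ) (j : ℕ) :
    ∀ k ∉ Set.range (fun k : ℕ => k + j),
      (Nat.descFactorial k j : ℝ) * y ^ k / (Nat.factorial k : ℝ) = 0 := by
  intro k hk
  have hkj : k < j := by
    by_contra h
    exact hk ⟨k - j, by simp; omega⟩
  simp [Nat.descFactorial_eq_zero_iff_lt.2 hkj]

lemma desc_summable (y : ℝ) (j : ℕ) :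
    Summable (fun k : ℕ => (Nat.descFactorial k j : ℝ) * y ^ k / (Nat.factorial k : ℝ)) := by
  rw [← Function.Injective.summable_iff (add_left_injective j) (desc_vanish y j)]
  have := desc_shift y j
  simp only [Function.comp_def]
  rw [this]
  exact (Real.summable_pow_div_factorial y).mul_left _

lemma desc_tsum (y : ℝ) (j : ℕ) :
    ∑' k : ℕ, (Nat.descFactorial k j : ℝ) * y ^ k / (Nat.factorial k : ℝ)
      = y ^ j * Real.exp y := by
  rw [← Function.Injective.tsum_eq (g := fun k : ℕ => k + j) (add_left_injective j)
      (Function.support_subset_iff'.2 (desc_vanish y j))]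
  calc ∑' k : ℕ, (Nat.descFactorial (k + j) j : ℝ) * y ^ (k + j) / (Nat.factorial (k + j) : ℝ)
      = ∑' k : ℕ, y ^ j * (y ^ k / (Nat.factorial k : ℝ)) := by rw [← desc_shift y j]
    _ = y ^ j * Real.exp y := by rw [tsum_mul_left, exp_tsum]

lemma d1c (k : ℕ) : (Nat.descFactorial k 1 : ℝ) = k := by
  simp [Nat.descFactorial_one]

lemma d2c (k : ℕ) : (Nat.descFactorial k 2 : ℝ) = (k : ℝ) ^ 2 - k := by
  rcases k with _ | n
  · simp
  · rw [Nat.succ_descFactorial_succ, Nat.descFactorial_one]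
    push_cast
    ring

lemma d3c (k : ℕ) : (Nat.descFactorial k 3 : ℝ) = (k : ℝ) ^ 3 - 3 * (k : ℝ) ^ 2 + 2 * k := by
  rcases k with _ | _ | n
  · simp
  · norm_num [Nat.descFactorial]
  · rw [Nat.succ_descFactorial_succ, Nat.succ_descFactorial_succ, Nat.descFactorial_one]
    push_cast
    ring

open Real MeasureTheory Filter

/-- The modified Szász–Mirakjan–Kantorovich operator of Mishra and Yadav. -/
noncomputable def szaszKant (a : ℝ) (m : ℕ) (f : ℝ → ℝ) (x : ℝ) : ℝ :=
  (m : ℝ) * ∑' k : ℕ,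
    Real.exp (-(x * Real.log a / (a ^ ((1 : ℝ) / (m : ℝ)) - 1))) *
      (x * Real.log a / (a ^ ((1 : ℝ) / (m : ℝ)) - 1)) ^ k / (Nat.factorial k : ℝ) *
      ∫ t in ((k : ℝ) / (m : ℝ))..(((k : ℝ) + 1) / (m : ℝ)), f t

/-- The `n`-th central moment of the operator. -/
noncomputable def szaszKantCM (a : ℝ) (m : ℕ) (n : ℕ) (x : ℝ) : ℝ :=
  szaszKant a m (fun t => (t - x) ^ n) x

theorem szaszKant_e3 (a : ℝ) (ha : 1 < a) (m : ℕ) (hm : 1 ≤ m)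
    (x : ℝ) (hx : 0 ≤ x) :
    szaszKant a m (fun t => t ^ 3) x =
      1 / (4 * (m : ℝ) ^ 3) +
        (7 / 2) * x * Real.log a / ((a ^ ((1 : ℝ) / (m : ℝ)) - 1) * (m : ℝ) ^ 3) +
        (9 / 2) * x ^ 2 * Real.log a ^ 2 / ((a ^ ((1 : ℝ) / (m : ℝ)) - 1) ^ 2 * (m : ℝ) ^ 3) +
        x ^ 3 * Real.log a ^ 3 / ((a ^ ((1 : ℝ) / (m : ℝ)) - 1) ^ 3 * (m : ℝ) ^ 3) := by
  have hm0 : (m : ℝ) ≠ 0 := by positivity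
  have hL : (0 : ℝ) < a ^ ((1 : ℝ) / (m : ℝ)) - 1 := by
    have h1 : (1 : ℝ) < a ^ ((1 : ℝ) / (m : ℝ)) := by
      exact (Real.one_lt_rpow_iff_of_pos (by linarith)).2 (Or.inl ⟨ha, by positivity⟩)
    linarith
  have hLne : a ^ ((1 : ℝ) / (m : ℝ)) - 1 ≠ 0 := ne_of_gt hL
  set y : ℝ := x * Real.log a / (a ^ ((1 : ℝ) / (m : ℝ)) - 1) with hy
  set C : ℝ := Real.exp (-y) / (4 * (m : ℝ) ^ 4) with hC
  have hfun : (fun k : ℕ =>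
      Real.exp (-y) * y ^ k / (Nat.factorial k : ℝ) *
        ∫ t in ((k : ℝ) / (m : ℝ))..(((k : ℝ) + 1) / (m : ℝ)), t ^ 3)
      = fun k : ℕ =>
        ((C * 4) * ((Nat.descFactorial k 3 : ℝ) * y ^ k / (Nat.factorial k : ℝ)) +
         (C * 18) * ((Nat.descFactorial k 2 : ℝ) * y ^ k / (Nat.factorial k : ℝ))) +
        ((C * 14) * ((Nat.descFactorial k 1 : ℝ) * y ^ k / (Nat.factorial k : ℝ)) +
         C * ((Nat.descFactorial k 0 : ℝ) * y ^ k / (Nat.factorial k : ℝ))) := by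
    funext k
    rw [integral_pow, d3c, d2c, d1c, Nat.descFactorial_zero, hC]
    have hf : (Nat.factorial k : ℝ) ≠ 0 := Nat.cast_ne_zero.2 (Nat.factorial_ne_zero k)
    push_cast
    field_simp
    ring
  have s3 := (desc_summable y 3).mul_left (C * 4)
  have s2 := (desc_summable y 2).mul_left (C * 18)
  have s1 := (desc_summable y 1).mul_left (C * 14)
  have s0 := (desc_summable y 0).mul_left C
  rw [szaszKant, hfun, Summable.tsum_add (s3.add s2) (s1.add s0), Summable.tsum_add s3 s2, Summable.tsum_add s1 s0,
    tsum_mul_left, tsum_mul_left, tsum_mul_left, tsum_mul_left,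
    desc_tsum, desc_tsum, desc_tsum, desc_tsum, hC]
  have hexp : Real.exp (-y) * Real.exp y = 1 := by
    rw [← Real.exp_add]; simp
  have hsimp : ∀ c u : ℝ, Real.exp (-y) / (4 * (m : ℝ) ^ 4) * c * (u * Real.exp y)
      = c * u / (4 * (m : ℝ) ^ 4) := by
    intro c u
    calc Real.exp (-y) / (4 * (m : ℝ) ^ 4) * c * (u * Real.exp y)
        = c * u * (Real.exp (-y) * Real.exp y) / (4 * (m : ℝ) ^ 4) := by ring
      _ = c * u / (4 * (m : ℝ) ^ 4) := by rw [hexp, mul_one]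
  have hsimp0 : Real.exp (-y) / (4 * (m : ℝ) ^ 4) * (y ^ 0 * Real.exp y)
      = 1 / (4 * (m : ℝ) ^ 4) := by
    have := hsimp 1 (y ^ 0)
    simpa using this
  rw [hsimp, hsimp, hsimp, hsimp0, hy]
  field_simp
  ring
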